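/- Let w = (w^(1), ..., w^(N)) be LCN filters with final filter v = π(w) satisfying ‖v‖_1 ≤ T, and set δ_i := ‖w^(i+1)‖_2² - ‖w^(i)‖_2². Then there exists a constant τ depending only on T, the final filter width k_v, and δ_1, ..., δ_{N-1}, such that ‖w^(i)‖_2² ≤ τ for all i = 1, ..., N. -/

import Mathlib

/-- The polynomial `p̃_i(x) = ∑_{j<k_i} w^(i)_{j+1} x^{j ∏_{n<i} s_n}` associated
with the `i`-th layer filter; the final filter `v = π(w)` of the LCN is given by
the coefficients of the product `∏_{i<N} p̃_i`, which has width
`k_v = k_1 + ∑_{i=2}^N (k_i-1) ∏_{m<i} s_m`. -/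
noncomputable def lcnPoly (k s : ℕ → ℕ) (w : ℕ → ℕ → ℝ) (i : ℕ) : Polynomial ℝ :=
  ∑ j ∈ Finset.range (k i),
    Polynomial.C (w i j) * Polynomial.X ^ (j * ∏ m ∈ Finset.range i, s m)

/-- If the final filter of an LCN satisfies `‖π(w)‖₁ ≤ T` and
`δ_i = ‖w^(i+1)‖₂² - ‖w^(i)‖₂²`, then there is a constant `τ` depending only on
`T`, the final width `k_v` (and the data `N, δ_1, …, δ_{N-1}`) such that
`‖w^(i)‖₂² ≤ τ` for all `i`. -/
noncomputable def toPolyE {K : ℕ} (v : EuclideanSpace ℝ (Fin K)) : Polynomial ℝ :=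
  ∑ j : Fin K, Polynomial.C (v j) * Polynomial.X ^ (j : ℕ)

lemma coeff_toPolyE {K : ℕ} (v : EuclideanSpace ℝ (Fin K)) (m : ℕ) :
    (toPolyE v).coeff m = if h : m < K then v ⟨m, h⟩ else 0 := by
  rw [toPolyE, Polynomial.finset_sum_coeff]
  simp only [Polynomial.coeff_C_mul, Polynomial.coeff_X_pow, mul_ite, mul_one, mul_zero]
  split
  · next h =>
    rw [Finset.sum_eq_single (⟨m, h⟩ : Fin K)]
    · simp
    · intro b _ hb
      simp only [ite_eq_right_iff]
      intro he; exact absurd (Fin.ext he.symm) hb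
    · simp
  · next h =>
    apply Finset.sum_eq_zero
    intro j _
    simp only [ite_eq_right_iff]
    intro he; omega

lemma natDegree_toPolyE_le {K : ℕ} (v : EuclideanSpace ℝ (Fin K)) :
    (toPolyE v).natDegree ≤ K - 1 := by
  apply Polynomial.natDegree_sum_le_of_forall_le
  intro j _
  refine le_trans (Polynomial.natDegree_C_mul_le _ _) ?_
  rw [Polynomial.natDegree_X_pow]
  omega

lemma cont_coeff_prod {N K : ℕ} (t : Finset (Fin N)) (n : ℕ) :
    Continuous fun c : Fin N → EuclideanSpace ℝ (Fin K) =>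
      (∏ i ∈ t, toPolyE (c i)).coeff n := by
  induction t using Finset.induction_on generalizing n with
  | empty => simpa using continuous_const
  | insert a t hmem ih =>
    next =>
    have : (fun c : Fin N → EuclideanSpace ℝ (Fin K) =>
        (∏ i ∈ insert a t, toPolyE (c i)).coeff n) =
        fun c => ∑ x ∈ Finset.HasAntidiagonal.antidiagonal n,
          (toPolyE (c a)).coeff x.1 * (∏ i ∈ t, toPolyE (c i)).coeff x.2 := by
      funext c
      rw [Finset.prod_insert hmem, Polynomial.coeff_mul]
    rw [this]
    apply continuous_finset_sum
    intro x _
    apply Continuous.mul ?_ (ih x.2)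
    simp only [coeff_toPolyE]
    split
    · exact (EuclideanSpace.proj _).continuous.comp (continuous_apply a)
    · exact continuous_const

lemma exists_eps (N K : ℕ) (hK : 1 ≤ K) :
    ∃ ε > (0:ℝ), ∀ c : Fin N → EuclideanSpace ℝ (Fin K),
      (∀ i, ‖c i‖ = 1) →
      ε ≤ ∑ n ∈ Finset.range (N*K+1), |(∏ i : Fin N, toPolyE (c i)).coeff n| := by
  set f : (Fin N → EuclideanSpace ℝ (Fin K)) → ℝ :=
    fun c => ∑ n ∈ Finset.range (N*K+1), |(∏ i : Fin N, toPolyE (c i)).coeff n| with hf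
  have hcont : Continuous f := by
    apply continuous_finset_sum
    intro n _
    exact (cont_coeff_prod Finset.univ n).abs
  set S : Set (Fin N → EuclideanSpace ℝ (Fin K)) :=
    Set.univ.pi (fun _ => Metric.sphere (0 : EuclideanSpace ℝ (Fin K)) 1) with hS
  have hScpt : IsCompact S := isCompact_univ_pi fun i => isCompact_sphere 0 1
  have hmemS : ∀ c, c ∈ S ↔ ∀ i, ‖c i‖ = 1 := by
    intro c
    simp [hS, Set.mem_pi]
  have hne : S.Nonempty := by
    refine ⟨fun _ => EuclideanSpace.single ⟨0, hK⟩ 1, ?_⟩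
    rw [hmemS]
    intro i
    rw [EuclideanSpace.norm_single]
    norm_num
  obtain ⟨x, hxS, hx'⟩ := hScpt.exists_isMinOn hne hcont.continuousOn
  have hx : ∀ c ∈ S, f x ≤ f c := fun c hc => hx' hc
  have hxpos : 0 < f x := by
    have hx1 : ∀ i, ‖x i‖ = 1 := (hmemS x).mp hxS
    have hne0 : ∀ i, toPolyE (x i) ≠ 0 := by
      intro i h0
      have : x i = 0 := by
        ext j
        have := coeff_toPolyE (x i) (j : ℕ)
        rw [h0] at this
        simp only [Polynomial.coeff_zero] at this
        rw [dif_pos j.isLt] at this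
        simpa using this.symm
      have h1 := hx1 i
      rw [this, norm_zero] at h1
      exact absurd h1 (by norm_num)
    have hprod : (∏ i : Fin N, toPolyE (x i)) ≠ 0 :=
      Finset.prod_ne_zero_iff.mpr fun i _ => hne0 i
    set p := ∏ i : Fin N, toPolyE (x i) with hp
    have hdeg : p.natDegree < N*K+1 := by
      have h1 : p.natDegree ≤ ∑ i : Fin N, (toPolyE (x i)).natDegree :=
        Polynomial.natDegree_prod_le _ _
      have h2 : ∑ i : Fin N, (toPolyE (x i)).natDegree ≤ ∑ _i : Fin N, (K-1) :=
        Finset.sum_le_sum fun i _ => natDegree_toPolyE_le (x i)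
      simp only [Finset.sum_const, Finset.card_univ, Fintype.card_fin, smul_eq_mul] at h2
      have : N * (K-1) ≤ N * K := Nat.mul_le_mul_left _ (Nat.sub_le _ _)
      omega
    have hc : p.coeff p.natDegree ≠ 0 := Polynomial.leadingCoeff_ne_zero.mpr hprod
    have : 0 < |p.coeff p.natDegree| := abs_pos.mpr hc
    calc (0:ℝ) < |p.coeff p.natDegree| := this
    _ ≤ f x := by
      apply Finset.single_le_sum (f := fun n => |p.coeff n|)
      · intro n _; exact abs_nonneg _
      · exact Finset.mem_range.mpr hdeg
  exact ⟨f x, hxpos, fun c hc => hx c ((hmemS c).mpr hc)⟩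

lemma coeff_lcnPoly (k s : ℕ → ℕ) (w : ℕ → ℕ → ℝ) (i m : ℕ) :
    (lcnPoly k s w i).coeff m =
      ∑ j ∈ Finset.range (k i),
        (if m = j * ∏ m ∈ Finset.range i, s m then w i j else 0) := by
  rw [lcnPoly, Polynomial.finset_sum_coeff]
  apply Finset.sum_congr rfl
  intro j _
  rw [Polynomial.coeff_C_mul, Polynomial.coeff_X_pow, mul_ite, mul_one, mul_zero]

lemma natDegree_lcnPoly_le (k s : ℕ → ℕ) (w : ℕ → ℕ → ℝ) (i : ℕ) (hk : 1 ≤ k i) :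
    (lcnPoly k s w i).natDegree ≤ (k i - 1) * ∏ m ∈ Finset.range i, s m := by
  apply Polynomial.natDegree_sum_le_of_forall_le
  intro j hj
  refine le_trans (Polynomial.natDegree_C_mul_le _ _) ?_
  rw [Polynomial.natDegree_X_pow]
  exact Nat.mul_le_mul_right _ (by simp at hj; omega)

lemma coeff_lcnPoly_mul (k s : ℕ → ℕ) (w : ℕ → ℕ → ℝ) (i j : ℕ) (hj : j < k i)
    (hs : ∀ m, 1 ≤ s m) :
    (lcnPoly k s w i).coeff (j * ∏ m ∈ Finset.range i, s m) = w i j := by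
  rw [coeff_lcnPoly]
  have hP : 0 < ∏ m ∈ Finset.range i, s m := Finset.prod_pos fun m _ => hs m
  rw [Finset.sum_eq_single_of_mem j (Finset.mem_range.mpr hj)]
  · simp
  · intro b _ hb
    rw [if_neg]
    intro he
    exact hb (Nat.eq_of_mul_eq_mul_right hP he.symm)

lemma sq_sum_lcnPoly (k s : ℕ → ℕ) (w : ℕ → ℕ → ℝ) (i kv : ℕ) (hs : ∀ m, 1 ≤ s m)
    (hk : 1 ≤ k i) (hb : (k i - 1) * ∏ m ∈ Finset.range i, s m < kv) :
    ∑ m ∈ Finset.range kv, ((lcnPoly k s w i).coeff m)^2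
      = ∑ j ∈ Finset.range (k i), (w i j)^2 := by
  set P := ∏ m ∈ Finset.range i, s m with hP
  have hPpos : 0 < P := Finset.prod_pos fun m _ => hs m
  have hinj : ∀ a ∈ Finset.range (k i), ∀ b ∈ Finset.range (k i),
      a * P = b * P → a = b :=
    fun a _ b _ h => Nat.eq_of_mul_eq_mul_right hPpos h
  have hsub : (Finset.range (k i)).image (fun j => j * P) ⊆ Finset.range kv := by
    intro m hm
    simp only [Finset.mem_image, Finset.mem_range] at hm ⊢
    obtain ⟨j, hj, rfl⟩ := hm
    calc j * P ≤ (k i - 1) * P := Nat.mul_le_mul_right _ (by omega)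
    _ < kv := hb
  have h1 : ∑ m ∈ Finset.range kv, ((lcnPoly k s w i).coeff m)^2
      = ∑ m ∈ (Finset.range (k i)).image (fun j => j * P),
          ((lcnPoly k s w i).coeff m)^2 := by
    symm
    apply Finset.sum_subset hsub
    intro m _ hm
    have : (lcnPoly k s w i).coeff m = 0 := by
      rw [coeff_lcnPoly]
      apply Finset.sum_eq_zero
      intro j hj
      rw [if_neg]
      intro he
      exact hm (Finset.mem_image.mpr ⟨j, hj, he.symm⟩)
    rw [this]; ring
  rw [h1, Finset.sum_image hinj]
  apply Finset.sum_congr rfl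
  intro j hj
  rw [coeff_lcnPoly_mul k s w i j (Finset.mem_range.mp hj) hs]

theorem stmt_9 (T : ℝ) (kv N : ℕ) (hN : 1 ≤ N) (δ : ℕ → ℝ) :
    ∃ τ : ℝ, ∀ (k s : ℕ → ℕ) (w : ℕ → ℕ → ℝ),
      (∀ i, 1 ≤ k i) → (∀ i, 1 ≤ s i) →
      kv = k 0 + ∑ i ∈ Finset.Ico 1 N, (k i - 1) * ∏ m ∈ Finset.range i, s m →
      (∀ i, i + 1 < N →
        δ i = (∑ n ∈ Finset.range (k (i + 1)), (w (i + 1) n) ^ 2) -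
          ∑ n ∈ Finset.range (k i), (w i n) ^ 2) →
      (∑ n ∈ Finset.range kv, |(∏ i ∈ Finset.range N, lcnPoly k s w i).coeff n|) ≤ T →
      ∀ i < N, (∑ n ∈ Finset.range (k i), (w i n) ^ 2) ≤ τ := by
  by_cases hkv0 : kv = 0
  · refine ⟨0, ?_⟩
    intro k s w hk hs hkveq hδ hT i hi
    exfalso
    have h1 : 1 ≤ k 0 := hk 0
    have h2 : 1 ≤ kv := hkveq ▸ le_trans h1 (Nat.le_add_right _ _)
    omega
  have hkv : 1 ≤ kv := Nat.one_le_iff_ne_zero.mpr hkv0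
  obtain ⟨ε, hε, hεle⟩ := exists_eps N kv hkv
  set M := ∑ i ∈ Finset.range N, |∑ l ∈ Finset.range i, δ l| with hM
  have hM0 : 0 ≤ M := Finset.sum_nonneg fun i _ => abs_nonneg _
  refine ⟨(T/ε)^2 + 1 + 2*M, ?_⟩
  intro k s w hk hs hkveq hδ hT
  set a : ℕ → ℝ := fun i => ∑ n ∈ Finset.range (k i), (w i n)^2 with ha
  have ha0 : ∀ i, 0 ≤ a i := fun i => Finset.sum_nonneg fun n _ => sq_nonneg _
  have hδ' : ∀ i, i + 1 < N → a (i+1) = a i + δ i := by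
    intro i h
    simp only [ha]
    linarith [hδ i h]
  have hchain : ∀ i, i < N → a i = a 0 + ∑ l ∈ Finset.range i, δ l := by
    intro i
    induction i with
    | zero => simp
    | succ n ih =>
      intro h
      rw [Finset.sum_range_succ, hδ' n h, ih (by omega)]
      ring
  have hdabs : ∀ i, i < N → |∑ l ∈ Finset.range i, δ l| ≤ M := by
    intro i hi
    exact Finset.single_le_sum (f := fun i => |∑ l ∈ Finset.range i, δ l|)
      (fun j _ => abs_nonneg _) (Finset.mem_range.mpr hi)
  have hTε0 : (0:ℝ) ≤ (T/ε)^2 := sq_nonneg _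
  by_cases hsmall : ∃ j, j < N ∧ a j ≤ 1
  · obtain ⟨j, hjN, hj1⟩ := hsmall
    intro i hi
    have hchi := hchain i hi
    have hchj := hchain j hjN
    have h1 := hdabs i hi
    have h2 := hdabs j hjN
    have h3 := le_abs_self (∑ l ∈ Finset.range i, δ l)
    have h4 := neg_abs_le (∑ l ∈ Finset.range j, δ l)
    linarith
  · push_neg at hsmall
    have h1a : ∀ j, j < N → 1 < a j := fun j hj => hsmall j hj
    have hSb : ∑ i ∈ Finset.range N, (k i - 1) * ∏ m ∈ Finset.range i, s m
        = kv - 1 := by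
      have hsplit : ∑ i ∈ Finset.range N, (k i - 1) * ∏ m ∈ Finset.range i, s m
          = (k 0 - 1) * ∏ m ∈ Finset.range 0, s m
            + ∑ i ∈ Finset.Ico 1 N, (k i - 1) * ∏ m ∈ Finset.range i, s m := by
        rw [Finset.range_eq_Ico, Finset.sum_eq_sum_Ico_succ_bot hN]
      rw [hsplit]
      simp only [Finset.range_zero, Finset.prod_empty, mul_one]
      have h0 := hk 0
      omega
    have hbound : ∀ i, i < N → (k i - 1) * ∏ m ∈ Finset.range i, s m ≤ kv - 1 := by
      intro i hi
      rw [← hSb]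
      exact Finset.single_le_sum (f := fun i => (k i - 1) * ∏ m ∈ Finset.range i, s m)
        (fun j _ => Nat.zero_le _) (Finset.mem_range.mpr hi)
    have hdeg : ∀ i, i < N → (lcnPoly k s w i).natDegree < kv := by
      intro i hi
      calc (lcnPoly k s w i).natDegree ≤ (k i - 1) * ∏ m ∈ Finset.range i, s m :=
        natDegree_lcnPoly_le k s w i (hk i)
      _ ≤ kv - 1 := hbound i hi
      _ < kv := by omega
    set r : ℕ → ℝ := fun i => Real.sqrt (a i) with hr
    have hrpos : ∀ j, j < N → 0 < r j := fun j hj =>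
      Real.sqrt_pos.mpr (lt_trans one_pos (h1a j hj))
    have hrsq : ∀ j, r j ^ 2 = a j := fun j => Real.sq_sqrt (ha0 j)
    set c : Fin N → EuclideanSpace ℝ (Fin kv) := fun i =>
      (WithLp.equiv 2 (Fin kv → ℝ)).symm
        (fun j => (lcnPoly k s w (i : ℕ)).coeff (j : ℕ) / r (i : ℕ)) with hc
    have hcapp : ∀ (i : Fin N) (j : Fin kv),
        c i j = (lcnPoly k s w (i : ℕ)).coeff (j : ℕ) / r (i : ℕ) := by
      intro i j; rfl
    have hnorm : ∀ i : Fin N, ‖c i‖ = 1 := by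
      intro i
      have hiN : (i : ℕ) < N := i.isLt
      rw [EuclideanSpace.norm_eq]
      have : ∑ j : Fin kv, ‖c i j‖ ^ 2 = 1 := by
        simp only [hcapp, Real.norm_eq_abs, sq_abs, div_pow]
        rw [← Finset.sum_div]
        rw [Fin.sum_univ_eq_sum_range (fun m => (lcnPoly k s w (i:ℕ)).coeff m ^ 2) kv]
        rw [sq_sum_lcnPoly k s w (i:ℕ) kv hs (hk _) (by have := hbound (i:ℕ) hiN; omega)]
        rw [hrsq]
        exact div_self (ne_of_gt (lt_trans one_pos (h1a _ hiN)))
      rw [this, Real.sqrt_one]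
    have key := hεle c hnorm
    have hctoPoly : ∀ i : Fin N,
        toPolyE (c i) = Polynomial.C (r (i:ℕ))⁻¹ * lcnPoly k s w (i:ℕ) := by
      intro i
      apply Polynomial.ext
      intro m
      rw [coeff_toPolyE, Polynomial.coeff_C_mul]
      split
      · next h =>
        rw [hcapp i ⟨m, h⟩]
        rw [div_eq_inv_mul]
      · next h =>
        rw [Polynomial.coeff_eq_zero_of_natDegree_lt
          (lt_of_lt_of_le (hdeg (i:ℕ) i.isLt) (by omega)), mul_zero]
    have hprodpoly : ∏ i : Fin N, toPolyE (c i)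
        = Polynomial.C (∏ i ∈ Finset.range N, (r i))⁻¹
            * ∏ i ∈ Finset.range N, lcnPoly k s w i := by
      simp only [hctoPoly]
      rw [Finset.prod_mul_distrib, ← map_prod, ← Finset.prod_inv_distrib]
      rw [Fin.prod_univ_eq_prod_range (fun i => (r i)⁻¹) N,
        Fin.prod_univ_eq_prod_range (fun i => lcnPoly k s w i) N]
    set R := ∏ i ∈ Finset.range N, r i with hR
    have hRpos : 0 < R :=
      Finset.prod_pos fun i hi => hrpos i (Finset.mem_range.mp hi)
    set V := ∏ i ∈ Finset.range N, lcnPoly k s w i with hV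
    have hVdeg : V.natDegree < kv := by
      calc V.natDegree ≤ ∑ i ∈ Finset.range N, (lcnPoly k s w i).natDegree :=
        Polynomial.natDegree_prod_le _ _
      _ ≤ ∑ i ∈ Finset.range N, (k i - 1) * ∏ m ∈ Finset.range i, s m :=
        Finset.sum_le_sum fun i hi => natDegree_lcnPoly_le k s w i (hk i)
      _ = kv - 1 := hSb
      _ < kv := by omega
    have hstep1 : ∀ n, |(∏ i : Fin N, toPolyE (c i)).coeff n| = R⁻¹ * |V.coeff n| := by
      intro n
      rw [hprodpoly, Polynomial.coeff_C_mul, abs_mul, abs_inv, abs_of_pos hRpos]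
    have hsub : Finset.range kv ⊆ Finset.range (N*kv+1) := by
      apply Finset.range_subset_range.mpr
      nlinarith [hN, hkv]
    have hsumeq : ∑ n ∈ Finset.range (N*kv+1), |(∏ i : Fin N, toPolyE (c i)).coeff n|
        = R⁻¹ * ∑ n ∈ Finset.range kv, |V.coeff n| := by
      calc ∑ n ∈ Finset.range (N*kv+1), |(∏ i : Fin N, toPolyE (c i)).coeff n|
          = ∑ n ∈ Finset.range (N*kv+1), R⁻¹ * |V.coeff n| :=
        Finset.sum_congr rfl fun n _ => hstep1 n
      _ = ∑ n ∈ Finset.range kv, R⁻¹ * |V.coeff n| := by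
        symm
        apply Finset.sum_subset hsub
        intro n _ hn
        rw [Polynomial.coeff_eq_zero_of_natDegree_lt
          (lt_of_lt_of_le hVdeg (by simpa using hn)), abs_zero, mul_zero]
      _ = R⁻¹ * ∑ n ∈ Finset.range kv, |V.coeff n| := by
        rw [Finset.mul_sum]
    rw [hsumeq] at key
    have hL0 : ∑ n ∈ Finset.range kv, |V.coeff n| ≤ T := hT
    have hRT : R ≤ T / ε := by
      rw [le_div_iff₀ hε]
      have h := mul_le_mul_of_nonneg_left key (le_of_lt hRpos)
      rw [← mul_assoc, mul_inv_cancel₀ (ne_of_gt hRpos), one_mul] at h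
      linarith
    have hRsq : R^2 ≤ (T/ε)^2 := pow_le_pow_left₀ (le_of_lt hRpos) hRT 2
    have hRsq' : R^2 = ∏ i ∈ Finset.range N, a i := by
      rw [hR, ← Finset.prod_pow]
      exact Finset.prod_congr rfl fun i _ => hrsq i
    intro i hi
    have h1 : a i * ∏ j ∈ (Finset.range N).erase i, a j = ∏ j ∈ Finset.range N, a j :=
      Finset.mul_prod_erase _ _ (Finset.mem_range.mpr hi)
    have h2 : (1:ℝ) ≤ ∏ j ∈ (Finset.range N).erase i, a j := by
      have h3 := Finset.prod_le_prod (s := (Finset.range N).erase i)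
        (f := fun _ => (1:ℝ)) (g := a)
        (fun j _ => zero_le_one)
        (fun j hj => le_of_lt (h1a j (Finset.mem_range.mp (Finset.mem_of_mem_erase hj))))
      simpa using h3
    have hia : a i ≤ ∏ j ∈ Finset.range N, a j := by
      nlinarith [ha0 i]
    linarith [hRsq' ▸ hRsq, hia]
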